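/- Suppose ψ(q, q̄, z, z̄) satisfies the two constraint equations e^{ψ_{q̄}}(ψ_{q̄ q̄} + ψ_{q q̄}) = λ ψ_{q z̄} and λ e^{ψ_q}(ψ_{qq} + ψ_{q q̄}) = ψ_{q̄ z}. Then ψ satisfies the Legendre-transformed hyperbolic complex Monge–Ampère equation ψ_{q q̄}ψ_{z z̄} − ψ_{q z̄}ψ_{q̄ z} = e^{ψ_q + ψ_{q̄}}(ψ_{q q̄}² − ψ_{qq}ψ_{q̄ q̄}) if and only if it satisfies the Boyer–Finley equation ψ_{z z̄} = e^{ψ_q + ψ_{q̄}}(ψ_{qq} + 2ψ_{q q̄} + ψ_{q̄ q̄}), provided ψ_{q q̄} ≠ 0. -/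
import Mathlib


noncomputable section

/-- Functions of the four independent complex variables (z₁, z̄₁, z₂, z̄₂). -/
abbrev F4 := ℂ → ℂ → ℂ → ℂ → ℂ

/-- Partial derivative in the 1st slot (z₁, resp. q). -/
def D1 (f : F4) : F4 := fun a b c d => deriv (fun t => f t b c d) a
/-- Partial derivative in the 2nd slot (z̄₁, resp. q̄). -/
def D2 (f : F4) : F4 := fun a b c d => deriv (fun t => f a t c d) b
/-- Partial derivative in the 3rd slot (z₂, resp. z). -/
def D3 (f : F4) : F4 := fun a b c d => deriv (fun t => f a b t d) c
/-- Partial derivative in the 4th slot (z̄₂, resp. z̄). -/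
def D4 (f : F4) : F4 := fun a b c d => deriv (fun t => f a b c t) d

/-- Smoothness of a function of the four complex variables. -/
def Sm (f : F4) : Prop :=
  ContDiff ℂ ⊤ (fun p : ℂ × ℂ × ℂ × ℂ => f p.1 p.2.1 p.2.2.1 p.2.2.2)

/- STATEMENT 7: if ψ(q,q̄,z,z̄) satisfies the two partner-symmetry constraints
e^{ψ_q̄}(ψ_{q̄q̄} + ψ_{qq̄}) = λψ_{qz̄} and λe^{ψ_q}(ψ_{qq} + ψ_{qq̄}) = ψ_{q̄z},
and ψ_{qq̄} ≠ 0, then the Legendre-transformed HCMA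
ψ_{qq̄}ψ_{zz̄} − ψ_{qz̄}ψ_{q̄z} = e^{ψ_q+ψ_q̄}(ψ_{qq̄}² − ψ_{qq}ψ_{q̄q̄})
holds iff the Boyer–Finley equation
ψ_{zz̄} = e^{ψ_q+ψ_q̄}(ψ_{qq} + 2ψ_{qq̄} + ψ_{q̄q̄}) holds.
Slots: 1 = q, 2 = q̄, 3 = z, 4 = z̄. -/
theorem legendre_hcma_iff_boyer_finley
    (lam : ℂ) (hlam : lam ≠ 0) (ψ : F4) (hψ : Sm ψ) (q qb z zb : ℂ)
    (hc1 : Complex.exp (D2 ψ q qb z zb) *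
        (D2 (D2 ψ) q qb z zb + D2 (D1 ψ) q qb z zb) = lam * D4 (D1 ψ) q qb z zb)
    (hc2 : lam * Complex.exp (D1 ψ q qb z zb) *
        (D1 (D1 ψ) q qb z zb + D2 (D1 ψ) q qb z zb) = D3 (D2 ψ) q qb z zb)
    (hnz : D2 (D1 ψ) q qb z zb ≠ 0) :
    (D2 (D1 ψ) q qb z zb * D4 (D3 ψ) q qb z zb
        - D4 (D1 ψ) q qb z zb * D3 (D2 ψ) q qb z zb
      = Complex.exp (D1 ψ q qb z zb + D2 ψ q qb z zb) *
          ((D2 (D1 ψ) q qb z zb) ^ 2 - D1 (D1 ψ) q qb z zb * D2 (D2 ψ) q qb z zb))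
    ↔
    (D4 (D3 ψ) q qb z zb
      = Complex.exp (D1 ψ q qb z zb + D2 ψ q qb z zb) *
          (D1 (D1 ψ) q qb z zb + 2 * D2 (D1 ψ) q qb z zb + D2 (D2 ψ) q qb z zb)) := by
  set a := D1 (D1 ψ) q qb z zb
  set b := D2 (D1 ψ) q qb z zb
  set c := D2 (D2 ψ) q qb z zb
  set P := D4 (D1 ψ) q qb z zb
  set Q := D3 (D2 ψ) q qb z zb
  set Z := D4 (D3 ψ) q qb z zb
  set E1 := Complex.exp (D1 ψ q qb z zb)
  set E2 := Complex.exp (D2 ψ q qb z zb)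
  have hE : Complex.exp (D1 ψ q qb z zb + D2 ψ q qb z zb) = E1 * E2 :=
    Complex.exp_add _ _
  have hprod : P * Q = E1 * E2 * ((a + b) * (c + b)) := by
    have h1 : lam * (P * Q) = lam * (E1 * E2 * ((a + b) * (c + b))) := by
      calc lam * (P * Q) = (lam * P) * Q := by ring
        _ = (E2 * (c + b)) * (lam * E1 * (a + b)) := by rw [← hc1, ← hc2]
        _ = lam * (E1 * E2 * ((a + b) * (c + b))) := by ring
    exact mul_left_cancel₀ hlam h1
  rw [hE]
  constructor
  · intro h
    apply mul_left_cancel₀ hnz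
    linear_combination h + hprod
  · intro h
    linear_combination b * h - hprod
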